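/- The deformed matrix Ũ_n = D T D is invertible with |det(Ũ_n)| = Π_{i=1}^s (k_i k_{s+1−i}/n)^{−1} ≥ 1; more precisely det(Ũ_n) = (−1)^{s(s−1)/2} Π_{i=1}^s n/(k_i k_{s+1−i}), and each factor n/(k_i k_{s+1−i}) ≥ 1. -/

import Mathlib

open Equiv Finset

lemma sign_eq_signAux {n : ℕ} (f : Equiv.Perm (Fin n)) :
    Equiv.Perm.sign f = Equiv.Perm.signAux f := by
  have key : ∀ (s : Multiset (Fin n)) (hs : ∀ x, x ∈ s),
      Equiv.Perm.signAux3 f hs = Equiv.Perm.signAux f := by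
    intro s
    induction s using Quotient.inductionOn with
    | h l =>
      intro hs
      show Equiv.Perm.signAux2 l f = _
      rw [← Equiv.Perm.signAux_eq_signAux2 l f (Equiv.refl _) (fun x _ => hs x)]
      congr 1
  exact key Finset.univ.val (fun x => Finset.mem_univ x)

lemma signAux_revPerm (n : ℕ) :
    Equiv.Perm.signAux (Fin.revPerm : Equiv.Perm (Fin n)) = (-1) ^ (n * (n - 1) / 2) := by
  unfold Equiv.Perm.signAux
  simp only [Fin.revPerm_apply]
  rw [Finset.prod_congr rfl (fun x hx => if_pos
      (le_of_lt (Fin.rev_lt_rev.mpr (Equiv.Perm.mem_finPairsLT.mp hx))))]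
  rw [Finset.prod_const]
  congr 1
  unfold Equiv.Perm.finPairsLT
  rw [Finset.card_sigma]
  simp only [Finset.card_attachFin, Finset.card_range]
  rw [Fin.sum_univ_eq_sum_range (fun i => i), Finset.sum_range_id]

lemma sign_revPerm (n : ℕ) :
    Equiv.Perm.sign (Fin.revPerm : Equiv.Perm (Fin n)) = (-1) ^ (n * (n - 1) / 2) := by
  rw [sign_eq_signAux, signAux_revPerm]


/-- The set of approximate divisors of `n`: distinct values of `⌊n/k⌋` for `1 ≤ k ≤ n`. -/
def Sn (n : ℕ) : Finset ℕ := (Finset.Icc 1 n).image (fun k => n / k)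

/-- The increasing enumeration `k_1 < ⋯ < k_s` of `S_n` (0-indexed by `Fin s`). -/
noncomputable def kseq (n : ℕ) : Fin (Sn n).card → ℕ :=
  fun i => ((Sn n).orderIsoOfFin rfl i : ℕ)

lemma one_le_of_mem_Sn {n m : ℕ} (hm : m ∈ Sn n) : 1 ≤ m := by
  obtain ⟨k, hk, rfl⟩ := Finset.mem_image.mp hm
  rw [Finset.mem_Icc] at hk
  exact (Nat.one_le_div_iff (by omega)).mpr hk.2

lemma le_of_mem_Sn {n m : ℕ} (hm : m ∈ Sn n) : m ≤ n := by
  obtain ⟨k, hk, rfl⟩ := Finset.mem_image.mp hm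
  exact Nat.div_le_self n k

lemma div_mem_Sn {n m : ℕ} (hm : m ∈ Sn n) : n / m ∈ Sn n :=
  Finset.mem_image.mpr ⟨m, Finset.mem_Icc.mpr ⟨one_le_of_mem_Sn hm, le_of_mem_Sn hm⟩, rfl⟩

lemma div_div_of_mem_Sn {n m : ℕ} (hm : m ∈ Sn n) : n / (n / m) = m := by
  obtain ⟨k, hk, rfl⟩ := Finset.mem_image.mp hm
  rw [Finset.mem_Icc] at hk
  have hm1 : 1 ≤ n / k := (Nat.one_le_div_iff (by omega)).mpr hk.2
  have h2 : 1 ≤ n / (n / k) :=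
    (Nat.one_le_div_iff (by omega)).mpr (Nat.div_le_self n k)
  apply le_antisymm
  · have hk' : k ≤ n / (n / k) := by
      rw [Nat.le_div_iff_mul_le (by omega), mul_comm]
      exact Nat.div_mul_le_self n k
    exact Nat.div_le_div_left hk' (by omega)
  · rw [Nat.le_div_iff_mul_le (by omega), mul_comm]
    exact Nat.div_mul_le_self n (n / k)

lemma kseq_mem (n : ℕ) (i : Fin (Sn n).card) : kseq n i ∈ Sn n :=
  ((Sn n).orderIsoOfFin rfl i).2

lemma kseq_strictMono (n : ℕ) : StrictMono (kseq n) := fun i j h => by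
  exact_mod_cast ((Sn n).orderIsoOfFin rfl).strictMono h

lemma kseq_rev (n : ℕ) (i : Fin (Sn n).card) : kseq n i.rev = n / kseq n i := by
  set e := (Sn n).orderIsoOfFin rfl with he
  set g : Fin (Sn n).card → Fin (Sn n).card :=
    fun i => e.symm ⟨n / kseq n i, div_mem_Sn (kseq_mem n i)⟩ with hg
  have hganti : ∀ {a b : Fin (Sn n).card}, a < b → g b < g a := by
    intro a b hab
    have h1 : kseq n a < kseq n b := kseq_strictMono n hab
    have hle : n / kseq n b ≤ n / kseq n a := Nat.div_le_div_left h1.le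
      (one_le_of_mem_Sn (kseq_mem n a))
    have hne : n / kseq n b ≠ n / kseq n a := by
      intro h
      have := congrArg (n / ·) h
      simp only [div_div_of_mem_Sn (kseq_mem n b), div_div_of_mem_Sn (kseq_mem n a)] at this
      exact h1.ne this.symm
    have : (⟨n / kseq n b, div_mem_Sn (kseq_mem n b)⟩ : {x // x ∈ Sn n}) <
        ⟨n / kseq n a, div_mem_Sn (kseq_mem n a)⟩ := by
      exact Subtype.mk_lt_mk.mpr (lt_of_le_of_ne hle hne)
    exact e.symm.strictMono this
  have hF : StrictMono (fun i : Fin (Sn n).card => g i.rev) := by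
    intro a b hab
    exact hganti (Fin.rev_lt_rev.mpr hab)
  have hFinj : Function.Injective (fun i : Fin (Sn n).card => g i.rev) := hF.injective
  have hFsurj : Function.Surjective (fun i : Fin (Sn n).card => g i.rev) :=
    Finite.surjective_of_injective hFinj
  haveI : WellFoundedLT (Fin (Sn n).card) := Finite.to_wellFoundedLT
  have hFid : (fun i : Fin (Sn n).card => g i.rev) = id := by
    apply hF.range_inj strictMono_id |>.mp
    rw [hFsurj.range_eq, Set.range_id]
  have hgi : g i.rev = i := congrFun hFid i
  have := congrArg e (congrFun hFid i.rev)
  simp only [g, OrderIso.apply_symm_apply, Fin.rev_rev, id_eq] at this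
  have : (e i.rev : ℕ) = n / kseq n i := by
    rw [← this]
  exact this


/-- The deformed matrix `Ũ_n = D T D`, with entries `n/(k_i k_j)` on and above the
antidiagonal and `0` below it. -/
noncomputable def Utilde (n : ℕ) : Matrix (Fin (Sn n).card) (Fin (Sn n).card) ℝ :=
  fun i j => if (i : ℕ) + (j : ℕ) + 1 ≤ (Sn n).card then
    (n : ℝ) / ((kseq n i : ℝ) * (kseq n j : ℝ)) else 0

/-- `Ũ_n` is invertible with `det Ũ_n = (-1)^{s(s-1)/2} ∏_i n/(k_i k_{s+1-i})`, each
factor `n/(k_i k_{s+1-i}) ≥ 1`, and hence `|det Ũ_n| ≥ 1`. -/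
theorem stmt_15 (n : ℕ) (hn : 0 < n) :
    IsUnit (Utilde n).det ∧
    (Utilde n).det = (-1 : ℝ) ^ ((Sn n).card * ((Sn n).card - 1) / 2) *
      ∏ i : Fin (Sn n).card, (n : ℝ) / ((kseq n i : ℝ) * (kseq n i.rev : ℝ)) ∧
    (∀ i : Fin (Sn n).card, 1 ≤ (n : ℝ) / ((kseq n i : ℝ) * (kseq n i.rev : ℝ))) ∧
    1 ≤ |(Utilde n).det| := by
  have hpos : ∀ i : Fin (Sn n).card, 0 < kseq n i := fun i => one_le_of_mem_Sn (kseq_mem n i)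
  have hmul : ∀ i : Fin (Sn n).card, kseq n i * kseq n i.rev ≤ n := by
    intro i; rw [kseq_rev, mul_comm]; exact Nat.div_mul_le_self n _
  have hdpos : ∀ i : Fin (Sn n).card, (0:ℝ) < (kseq n i : ℝ) * (kseq n i.rev : ℝ) := fun i =>
    mul_pos (by exact_mod_cast hpos i) (by exact_mod_cast hpos i.rev)
  have hfac : ∀ i : Fin (Sn n).card, 1 ≤ (n : ℝ) / ((kseq n i : ℝ) * (kseq n i.rev : ℝ)) :=
    fun i => (one_le_div (hdpos i)).mpr (by exact_mod_cast hmul i)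
  set E := (Sn n).card * ((Sn n).card - 1) / 2 with hE
  set B := (Utilde n).submatrix id (Fin.revPerm : Equiv.Perm (Fin (Sn n).card)) with hB
  have hBT : B.BlockTriangular id := by
    intro i j hij
    have hij' : (j : ℕ) < (i : ℕ) := hij
    show Utilde n i (Fin.rev j) = 0
    rw [Utilde]
    rw [if_neg]
    have hi := i.is_lt
    have hj := j.is_lt
    rw [Fin.val_rev]
    omega
  have hdiag : ∀ i : Fin (Sn n).card,
      B i i = (n : ℝ) / ((kseq n i : ℝ) * (kseq n i.rev : ℝ)) := by
    intro i
    show Utilde n i (Fin.rev i) = _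
    rw [Utilde, if_pos]
    have hi := i.is_lt
    rw [Fin.val_rev]
    omega
  have hdet2 : B.det = ∏ i : Fin (Sn n).card, (n : ℝ) / ((kseq n i : ℝ) * (kseq n i.rev : ℝ)) := by
    rw [Matrix.det_of_upperTriangular hBT]
    exact Finset.prod_congr rfl fun i _ => hdiag i
  have hperm := Matrix.det_permute' (Fin.revPerm : Equiv.Perm (Fin (Sn n).card)) (Utilde n)
  rw [sign_revPerm] at hperm
  have hperm' : B.det = (-1:ℝ)^E * (Utilde n).det := by
    rw [hB, hperm]
    norm_num
    exact Or.inl rfl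
  have hc : ((-1:ℝ)^E) * ((-1:ℝ)^E) = 1 := by
    rw [← pow_add, ← two_mul, pow_mul, neg_one_sq, one_pow]
  have hform : (Utilde n).det = (-1:ℝ)^E *
      ∏ i : Fin (Sn n).card, (n : ℝ) / ((kseq n i : ℝ) * (kseq n i.rev : ℝ)) := by
    calc (Utilde n).det = ((-1:ℝ)^E * (-1:ℝ)^E) * (Utilde n).det := by rw [hc, one_mul]
      _ = (-1:ℝ)^E * ((-1:ℝ)^E * (Utilde n).det) := by ring
      _ = (-1:ℝ)^E * B.det := by rw [← hperm']
      _ = _ := by rw [hdet2]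
  have hprodpos : 0 < ∏ i : Fin (Sn n).card, (n : ℝ) / ((kseq n i : ℝ) * (kseq n i.rev : ℝ)) :=
    Finset.prod_pos fun i _ => lt_of_lt_of_le one_pos (hfac i)
  have hprodone : 1 ≤ ∏ i : Fin (Sn n).card, (n : ℝ) / ((kseq n i : ℝ) * (kseq n i.rev : ℝ)) := by
    calc (1:ℝ) = ∏ _i : Fin (Sn n).card, (1:ℝ) := by simp
      _ ≤ _ := Finset.prod_le_prod (fun i _ => zero_le_one) (fun i _ => hfac i)
  refine ⟨?_, hform, hfac, ?_⟩
  · rw [isUnit_iff_ne_zero, hform]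
    exact mul_ne_zero (pow_ne_zero _ (by norm_num)) (ne_of_gt hprodpos)
  · rw [hform, abs_mul, abs_pow, abs_neg, abs_one, one_pow, one_mul, abs_of_pos hprodpos]
    exact hprodone
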